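/- The chromatic number of the k-th power of the infinite triangular grid equals ⌈3(k+1)^2/4⌉ for every k ≥ 1. -/

import Mathlib

/-- The infinite triangular grid. -/
def triGrid : SimpleGraph (ℤ × ℤ) where
  Adj u v := (u.1 - v.1).natAbs + (u.2 - v.2).natAbs = 1 ∨
    (u.1 - v.1 = 1 ∧ u.2 - v.2 = -1) ∨ (u.1 - v.1 = -1 ∧ u.2 - v.2 = 1)
  symm := ⟨by intro u v h; omega⟩
  loopless := ⟨by intro u h; omega⟩

/-- The `k`-th power of a graph. -/
def graphPow {V : Type*} (G : SimpleGraph V) (k : ℕ) : SimpleGraph V where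
  Adj u v := u ≠ v ∧ G.dist u v ≤ k
  symm := ⟨by
    intro u v h
    exact ⟨h.1.symm, by rw [SimpleGraph.dist_comm]; exact h.2⟩⟩
  loopless := ⟨by intro u h; exact h.1 rfl⟩

open Finset
def hexDist (a b : ℤ) : ℕ := (a.natAbs + b.natAbs + (a + b).natAbs) / 2

lemma triGrid_adj {u v : ℤ × ℤ} : triGrid.Adj u v ↔
    ((u.1 - v.1).natAbs + (u.2 - v.2).natAbs = 1 ∨
    (u.1 - v.1 = 1 ∧ u.2 - v.2 = -1) ∨ (u.1 - v.1 = -1 ∧ u.2 - v.2 = 1)) := Iff.rfl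

lemma hexDist_le_length {u v : ℤ × ℤ} (p : triGrid.Walk u v) :
    hexDist (u.1 - v.1) (u.2 - v.2) ≤ p.length := by
  induction p with
  | nil => simp only [hexDist]; omega
  | cons h p ih =>
    rw [triGrid_adj] at h
    rw [SimpleGraph.Walk.length_cons]
    simp only [hexDist] at *
    omega

lemma exists_step (a b : ℤ) (h : a ≠ 0 ∨ b ≠ 0) :
    ∃ p q : ℤ, (p.natAbs + q.natAbs = 1 ∨ (p = 1 ∧ q = -1) ∨ (p = -1 ∧ q = 1)) ∧
      hexDist (a - p) (b - q) + 1 ≤ hexDist a b := by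
  simp only [hexDist]
  rcases lt_trichotomy a 0 with ha|ha|ha <;> rcases lt_trichotomy b 0 with hb|hb|hb
  · exact ⟨-1, 0, by omega, by omega⟩
  · exact ⟨-1, 0, by omega, by omega⟩
  · exact ⟨-1, 1, by omega, by omega⟩
  · exact ⟨0, -1, by omega, by omega⟩
  · omega
  · exact ⟨0, 1, by omega, by omega⟩
  · exact ⟨1, -1, by omega, by omega⟩
  · exact ⟨1, 0, by omega, by omega⟩
  · exact ⟨1, 0, by omega, by omega⟩

lemma exists_walk : ∀ (n : ℕ) (u v : ℤ × ℤ), hexDist (u.1 - v.1) (u.2 - v.2) ≤ n →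
    ∃ p : triGrid.Walk u v, p.length ≤ n
  | 0, u, v, h => by
      have h1 : u = v := by
        simp only [hexDist] at h
        exact Prod.ext (by omega) (by omega)
      subst h1; exact ⟨.nil, by simp⟩
  | (n+1), u, v, h => by
      by_cases huv : u = v
      · subst huv; exact ⟨.nil, by simp⟩
      · have hne : u.1 - v.1 ≠ 0 ∨ u.2 - v.2 ≠ 0 := by
          by_contra hc
          push_neg at hc
          exact huv (Prod.ext (by omega) (by omega))
        obtain ⟨p, q, hadj, hdec⟩ := exists_step _ _ hne
        have hA : triGrid.Adj u (u.1 - p, u.2 - q) := by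
          rw [triGrid_adj]; simp only []; omega
        have h2 : hexDist ((u.1 - p) - v.1) ((u.2 - q) - v.2) ≤ n := by
          have e1 : (u.1 - p) - v.1 = (u.1 - v.1) - p := by ring
          have e2 : (u.2 - q) - v.2 = (u.2 - v.2) - q := by ring
          rw [e1, e2]; omega
        obtain ⟨w, hw⟩ := exists_walk n (u.1 - p, u.2 - q) v h2
        exact ⟨.cons hA w, by rw [SimpleGraph.Walk.length_cons]; omega⟩

lemma triGrid_reachable (u v : ℤ × ℤ) : triGrid.Reachable u v :=
  ⟨(exists_walk _ u v le_rfl).choose⟩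

lemma triGrid_dist (u v : ℤ × ℤ) : triGrid.dist u v = hexDist (u.1 - v.1) (u.2 - v.2) := by
  apply le_antisymm
  · obtain ⟨p, hp⟩ := exists_walk _ u v le_rfl
    exact (SimpleGraph.dist_le p).trans hp
  · obtain ⟨p, hp⟩ := (triGrid_reachable u v).exists_walk_length_eq_dist
    rw [← hp]
    exact hexDist_le_length p
lemma pow_adj {k : ℕ} {u v : ℤ × ℤ} : (graphPow triGrid k).Adj u v ↔
    u ≠ v ∧ hexDist (u.1 - v.1) (u.2 - v.2) ≤ k := by
  constructor
  · rintro ⟨h1, h2⟩; rw [triGrid_dist] at h2; exact ⟨h1, h2⟩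
  · rintro ⟨h1, h2⟩; exact ⟨h1, by rw [triGrid_dist]; exact h2⟩

lemma small_of_mul_small {D A X : ℤ} (hD : 0 < D) (h1 : D * A ≤ X) (h2 : -X ≤ D * A)
    (hX : 2 * X < 4 * D) : -1 ≤ A ∧ A ≤ 1 := by
  constructor
  · by_contra hc
    push_neg at hc
    have : D * A ≤ D * (-2) := mul_le_mul_of_nonneg_left (by omega) hD.le
    omega
  · by_contra hc
    push_neg at hc
    have : D * 2 ≤ D * A := mul_le_mul_of_nonneg_left (by omega) hD.le
    omega

/-- Upper bound, odd case: `k = 2*m - 1`. -/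
lemma colorable_odd (m : ℕ) (hm : 1 ≤ m) :
    (graphPow triGrid (2 * m - 1)).Colorable (m * (3 * m)) := by
  haveI : NeZero m := ⟨by omega⟩
  haveI : NeZero (3 * m) := ⟨by omega⟩
  have C : (graphPow triGrid (2 * m - 1)).Coloring (ZMod m × ZMod (3 * m)) := by
    refine SimpleGraph.Coloring.mk
      (fun p => ((p.2 : ZMod m), ((p.1 + 2 * p.2 : ℤ) : ZMod (3 * m)))) ?_
    intro u v hadj hc
    rw [pow_adj] at hadj
    obtain ⟨hne, hdist⟩ := hadj
    simp only [Prod.mk.injEq] at hc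
    obtain ⟨hc1, hc2⟩ := hc
    have hd1 : (m : ℤ) ∣ (u.2 - v.2) := by
      rw [← ZMod.intCast_zmod_eq_zero_iff_dvd]
      push_cast
      rw [hc1]
      ring
    have hd2 : ((3 * m : ℕ) : ℤ) ∣ ((u.1 - v.1) + 2 * (u.2 - v.2)) := by
      rw [← ZMod.intCast_zmod_eq_zero_iff_dvd]
      have e : (u.1 - v.1) + 2 * (u.2 - v.2) = (u.1 + 2 * u.2) - (v.1 + 2 * v.2) := by ring
      rw [e, Int.cast_sub, hc2, sub_self]
    obtain ⟨q, hq⟩ := hd1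
    obtain ⟨r, hr⟩ := hd2
    push_cast at hr
    set M : ℤ := ((m : ℕ) : ℤ) with hMdef
    have hM1 : 1 ≤ M := by rw [hMdef]; exact_mod_cast hm
    set p : ℤ := 3 * r - 2 * q with hpdef
    have hdx : u.1 - v.1 = M * p := by rw [hpdef]; linear_combination hr - 2 * hq
    have hdxy : (u.1 - v.1) + (u.2 - v.2) = M * (p + q) := by
      rw [hpdef]; linear_combination hr - hq
    have hne' : ¬(u.1 - v.1 = 0 ∧ u.2 - v.2 = 0) := by
      rintro ⟨h1, h2⟩
      exact hne (Prod.ext (by omega) (by omega))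
    simp only [hexDist] at hdist
    have hbp : M * p ≤ 2 * M - 1 ∧ -(2 * M - 1) ≤ M * p := by
      rw [← hdx]; omega
    have hbq : M * q ≤ 2 * M - 1 ∧ -(2 * M - 1) ≤ M * q := by
      rw [← hq]; omega
    have hbs : M * (p + q) ≤ 2 * M - 1 ∧ -(2 * M - 1) ≤ M * (p + q) := by
      rw [← hdxy]; omega
    have h1 := small_of_mul_small (by omega) hbp.1 hbp.2 (by omega)
    have h2 := small_of_mul_small (by omega) hbq.1 hbq.2 (by omega)
    have h3 := small_of_mul_small (by omega) hbs.1 hbs.2 (by omega)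
    -- p + 2*q = 3*r
    have hr3 : p + 2 * q = 3 * r := by rw [hpdef]; ring
    obtain ⟨h1a, h1b⟩ := h1
    obtain ⟨h2a, h2b⟩ := h2
    interval_cases p <;> interval_cases q <;> omega
  have := C.colorable
  rwa [Fintype.card_prod, ZMod.card, ZMod.card] at this

lemma even_key (M x y t : ℤ) (hM : 1 ≤ M)
    (ht : x - (3 * M + 1) * y = (3 * M ^ 2 + 3 * M + 1) * t)
    (hx : x ≤ 2 * M) (hx' : -(2 * M) ≤ x) (hy : y ≤ 2 * M) (hy' : -(2 * M) ≤ y)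
    (hs : x + y ≤ 2 * M) (hs' : -(2 * M) ≤ x + y) : x = 0 ∧ y = 0 := by
  have hD1 : 0 < 3 * M ^ 2 + 3 * M + 1 := by nlinarith
  have hDA : (3 * M ^ 2 + 3 * M + 1) * ((M + 1) * t + y) = (M + 1) * x - M * y := by
    linear_combination (-(M + 1)) * ht
  have hDB : (3 * M ^ 2 + 3 * M + 1) * (M * t + y) = M * x + (2 * M + 1) * y := by
    linear_combination (-M) * ht
  have hx2 : x = (2 * M + 1) * ((M + 1) * t + y) + M * (M * t + y) := by
    linear_combination ht
  have hy2 : y = -M * ((M + 1) * t + y) + (M + 1) * (M * t + y) := by ring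
  set A : ℤ := (M + 1) * t + y with hAdef
  set B : ℤ := M * t + y with hBdef
  clear_value A B
  have c1 : (M + 1) * x ≤ (M + 1) * (2 * M) := mul_le_mul_of_nonneg_left hx (by omega)
  have c2 : (M + 1) * (-(2 * M)) ≤ (M + 1) * x := mul_le_mul_of_nonneg_left hx' (by omega)
  have c3 : M * y ≤ M * (2 * M) := mul_le_mul_of_nonneg_left hy (by omega)
  have c4 : M * (-(2 * M)) ≤ M * y := mul_le_mul_of_nonneg_left hy' (by omega)
  have c5 : (2 * M + 1) * y ≤ (2 * M + 1) * (2 * M) := mul_le_mul_of_nonneg_left hy (by omega)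
  have c6 : (2 * M + 1) * (-(2 * M)) ≤ (2 * M + 1) * y := mul_le_mul_of_nonneg_left hy' (by omega)
  have c7 : M * x ≤ M * (2 * M) := mul_le_mul_of_nonneg_left hx (by omega)
  have c8 : M * (-(2 * M)) ≤ M * x := mul_le_mul_of_nonneg_left hx' (by omega)
  have hXA : (3 * M ^ 2 + 3 * M + 1) * A ≤ 4 * M ^ 2 + 2 * M
      ∧ -(4 * M ^ 2 + 2 * M) ≤ (3 * M ^ 2 + 3 * M + 1) * A := by
    constructor <;> nlinarith
  have hXB : (3 * M ^ 2 + 3 * M + 1) * B ≤ 6 * M ^ 2 + 2 * M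
      ∧ -(6 * M ^ 2 + 2 * M) ≤ (3 * M ^ 2 + 3 * M + 1) * B := by
    constructor <;> nlinarith
  have hA1 := small_of_mul_small hD1 hXA.1 hXA.2 (by nlinarith)
  have hB1 := small_of_mul_small hD1 hXB.1 hXB.2 (by nlinarith)
  obtain ⟨hA1a, hA1b⟩ := hA1
  obtain ⟨hB1a, hB1b⟩ := hB1
  interval_cases A <;> interval_cases B <;> omega

/-- Upper bound, even case: `k = 2*m`. -/
lemma colorable_even (m : ℕ) (hm : 1 ≤ m) :
    (graphPow triGrid (2 * m)).Colorable (3 * m ^ 2 + 3 * m + 1) := by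
  haveI : NeZero (3 * m ^ 2 + 3 * m + 1) := ⟨by omega⟩
  have C : (graphPow triGrid (2 * m)).Coloring (ZMod (3 * m ^ 2 + 3 * m + 1)) := by
    refine SimpleGraph.Coloring.mk
      (fun p => ((p.1 - (3 * (m : ℤ) + 1) * p.2 : ℤ) : ZMod (3 * m ^ 2 + 3 * m + 1))) ?_
    intro u v hadj hc
    rw [pow_adj] at hadj
    obtain ⟨hne, hdist⟩ := hadj
    have hM1 : 1 ≤ ((m : ℕ) : ℤ) := by exact_mod_cast hm
    have hd : ((3 * (m : ℤ) ^ 2 + 3 * (m : ℤ) + 1))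
        ∣ ((u.1 - v.1) - (3 * (m : ℤ) + 1) * (u.2 - v.2)) := by
      have hD : ((3 * m ^ 2 + 3 * m + 1 : ℕ) : ℤ) = 3 * (m : ℤ) ^ 2 + 3 * (m : ℤ) + 1 := by
        push_cast; ring
      rw [← hD, ← ZMod.intCast_zmod_eq_zero_iff_dvd]
      have e : (u.1 - v.1) - (3 * (m : ℤ) + 1) * (u.2 - v.2)
          = (u.1 - (3 * (m : ℤ) + 1) * u.2) - (v.1 - (3 * (m : ℤ) + 1) * v.2) := by ring
      rw [e, Int.cast_sub, show ((u.1 - (3 * (m : ℤ) + 1) * u.2 : ℤ)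
          : ZMod (3 * m ^ 2 + 3 * m + 1))
          = ((v.1 - (3 * (m : ℤ) + 1) * v.2 : ℤ) : ZMod (3 * m ^ 2 + 3 * m + 1)) from hc,
        sub_self]
    obtain ⟨t, ht⟩ := hd
    simp only [hexDist] at hdist
    have key := even_key ((m : ℕ) : ℤ) (u.1 - v.1) (u.2 - v.2) t hM1
      (by linear_combination ht) (by omega) (by omega) (by omega) (by omega)
      (by omega) (by omega)
    exact hne (Prod.ext (by omega) (by omega))
  have := C.colorable
  rwa [ZMod.card] at this


open Finset

lemma sum_rev (s : ℕ) : (∑ x ∈ range s, (s - x)) * 2 = s * (s + 1) := by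
  induction s with
  | zero => simp
  | succ n ih =>
    rw [Finset.sum_range_succ]
    have h1 : ∀ x ∈ range n, n + 1 - x = (n - x) + 1 := fun x hx => by
      simp only [mem_range] at hx; omega
    rw [Finset.sum_congr rfl h1, Finset.sum_add_distrib, Finset.sum_const, card_range,
      smul_eq_mul, mul_one]
    have h0 : n + 1 - n = 1 := by omega
    rw [h0]
    nlinarith [ih]

lemma tri_card (s n : ℕ) (h : s ≤ n) :
    ((range n ×ˢ range n).filter (fun p => p.1 + p.2 < s)).card = s * (s + 1) / 2 := by
  have he : (range n ×ˢ range n).filter (fun p => p.1 + p.2 < s)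
      = (range s).biUnion (fun x => {x} ×ˢ range (s - x)) := by
    ext p
    simp only [mem_filter, mem_product, mem_range, mem_biUnion, mem_singleton]
    constructor
    · rintro ⟨⟨h1, h2⟩, h3⟩
      exact ⟨p.1, by omega, rfl, by omega⟩
    · rintro ⟨x, hx, h1, h2⟩
      omega
  rw [he, card_biUnion]
  · have hc : ∀ x ∈ range s, ({x} ×ˢ range (s - x)).card = s - x := by
      intro x _
      rw [card_product, card_singleton, card_range, one_mul]
    rw [sum_congr rfl hc]
    have hg := sum_rev s
    exact (Nat.div_eq_of_eq_mul_left (by norm_num) hg.symm).symm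
  · intro a _ b _ hab
    simp only [Finset.disjoint_left, mem_product, mem_singleton, mem_range]
    rintro p ⟨h1, _⟩ ⟨h2, _⟩
    exact hab (h1 ▸ h2 ▸ rfl)

lemma hex_card (k t : ℕ) (h2t : 2 * t ≤ k) (h2t' : k ≤ 2 * t + 1) :
    (((range (k + 1) ×ˢ range (k + 1)).filter
      (fun p => t ≤ p.1 + p.2 ∧ p.1 + p.2 ≤ t + k)).card) = (3 * (k + 1) ^ 2 + 3) / 4 := by
  have hsplit := Finset.card_filter_add_card_filter_not
    (s := range (k + 1) ×ˢ range (k + 1)) (p := fun p => t ≤ p.1 + p.2 ∧ p.1 + p.2 ≤ t + k)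
  have hneg : (range (k + 1) ×ˢ range (k + 1)).filter
        (fun a => ¬(fun p => t ≤ p.1 + p.2 ∧ p.1 + p.2 ≤ t + k) a)
      = (range (k + 1) ×ˢ range (k + 1)).filter (fun p => p.1 + p.2 < t)
        ∪ (range (k + 1) ×ˢ range (k + 1)).filter (fun p => t + k < p.1 + p.2) := by
    ext p
    simp only [mem_filter, mem_union]
    constructor
    · rintro ⟨hp, h⟩
      by_cases h1 : p.1 + p.2 < t
      · exact Or.inl ⟨hp, h1⟩
      · exact Or.inr ⟨hp, by omega⟩
    · rintro (⟨hp, h⟩ | ⟨hp, h⟩) <;> exact ⟨hp, by omega⟩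
  have hdisj : Disjoint
      ((range (k + 1) ×ˢ range (k + 1)).filter (fun p => p.1 + p.2 < t))
      ((range (k + 1) ×ˢ range (k + 1)).filter (fun p => t + k < p.1 + p.2)) := by
    simp only [Finset.disjoint_left, mem_filter]
    rintro p ⟨_, h1⟩ ⟨_, h2⟩
    omega
  have hlo : ((range (k + 1) ×ˢ range (k + 1)).filter (fun p => p.1 + p.2 < t)).card
      = t * (t + 1) / 2 := tri_card t (k + 1) (by omega)
  have hhi : ((range (k + 1) ×ˢ range (k + 1)).filter (fun p => t + k < p.1 + p.2)).card
      = (k - t) * ((k - t) + 1) / 2 := by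
    rw [← tri_card (k - t) (k + 1) (by omega)]
    apply Finset.card_bij (i := fun p _ => (k - p.1, k - p.2))
    · rintro p hp
      simp only [mem_filter, mem_product, mem_range] at hp ⊢
      omega
    · rintro a ha b hb hab
      simp only [mem_filter, mem_product, mem_range] at ha hb
      rw [Prod.ext_iff] at hab ⊢
      simp only at hab ⊢
      omega
    · rintro b hb
      simp only [mem_filter, mem_product, mem_range] at hb
      refine ⟨(k - b.1, k - b.2), ?_, ?_⟩
      · simp only [mem_filter, mem_product, mem_range]
        omega
      · rw [Prod.ext_iff]
        simp only
        omega
  have hR : (range (k + 1) ×ˢ range (k + 1)).card = (k + 1) * (k + 1) := by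
    rw [card_product, card_range]
  rw [hneg, card_union_of_disjoint hdisj, hlo, hhi, hR] at hsplit
  obtain ⟨c, hc⟩ : ∃ c, ((range (k + 1) ×ˢ range (k + 1)).filter
      (fun p => t ≤ p.1 + p.2 ∧ p.1 + p.2 ≤ t + k)).card = c := ⟨_, rfl⟩
  rw [hc] at hsplit ⊢
  clear hneg hdisj hlo hhi hR hc
  rcases Nat.even_or_odd k with ⟨a, ha⟩ | ⟨a, ha⟩
  · obtain ⟨w, hw⟩ := Nat.even_mul_succ_self a
    have h1 : t = a := by omega
    have h3 : t * (t + 1) = 2 * w := by rw [h1]; linarith [hw]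
    have h4 : (k - t) * ((k - t) + 1) = 2 * w := by
      rw [show k - t = a from by omega]; linarith [hw]
    have h2 : (k + 1) * (k + 1) = 8 * w + 1 := by rw [ha]; linarith [hw]
    have h5 : 3 * (k + 1) ^ 2 + 3 = 24 * w + 6 := by rw [ha]; linarith [hw]
    rw [h2, h3, h4] at hsplit
    rw [h5]
    omega
  · obtain ⟨w, hw⟩ := Nat.even_mul_succ_self a
    have h1 : t = a := by omega
    have h3 : t * (t + 1) = 2 * w := by rw [h1]; linarith [hw]
    have h4 : (k - t) * ((k - t) + 1) = 2 * w + 2 * a + 2 := by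
      rw [show k - t = a + 1 from by omega]; linarith [hw]
    have h2 : (k + 1) * (k + 1) = 8 * w + 4 * a + 4 := by rw [ha]; linarith [hw]
    have h5 : 3 * (k + 1) ^ 2 + 3 = 24 * w + 12 * a + 15 := by rw [ha]; linarith [hw]
    rw [h2, h3, h4] at hsplit
    rw [h5]
    omega

def cliqueSet (k : ℕ) : Finset (ℤ × ℤ) :=
  ((range (k + 1) ×ˢ range (k + 1)).filter
    (fun p => k / 2 ≤ p.1 + p.2 ∧ p.1 + p.2 ≤ k / 2 + k)).image
    (fun p => ((p.1 : ℤ), (p.2 : ℤ)))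

lemma cast_inj_pair : Function.Injective (fun p : ℕ × ℕ => ((p.1 : ℤ), (p.2 : ℤ))) := by
  rintro a b h
  rw [Prod.ext_iff] at h ⊢
  simp only at h
  exact ⟨by exact_mod_cast h.1, by exact_mod_cast h.2⟩

lemma cliqueSet_card (k : ℕ) : (cliqueSet k).card = (3 * (k + 1) ^ 2 + 3) / 4 := by
  rw [cliqueSet, Finset.card_image_of_injective _ cast_inj_pair,
    hex_card k (k / 2) (by omega) (by omega)]

lemma cliqueSet_isClique (k : ℕ) : (graphPow triGrid k).IsClique (cliqueSet k) := by
  intro u hu v hv hne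
  rw [pow_adj]
  refine ⟨hne, ?_⟩
  simp only [cliqueSet, Finset.coe_image, Set.mem_image, Finset.mem_coe, mem_filter,
    mem_product, mem_range] at hu hv
  obtain ⟨a, ⟨⟨ha1, ha2⟩, ha3, ha4⟩, rfl⟩ := hu
  obtain ⟨b, ⟨⟨hb1, hb2⟩, hb3, hb4⟩, rfl⟩ := hv
  simp only [hexDist]
  omega


/-- The chromatic number of the `k`-th power of the triangular grid is
`⌈3(k+1)^2 / 4⌉` (Sevcikova). -/
theorem chromaticNumber_triGrid_pow (k : ℕ) (hk : 1 ≤ k) :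
    (graphPow triGrid k).chromaticNumber = (((3 * (k + 1) ^ 2 + 3) / 4 : ℕ) : ℕ∞) := by
  apply le_antisymm
  · rcases Nat.even_or_odd k with ⟨m, hm⟩ | ⟨m, hm⟩
    · -- k = m + m
      have hm1 : 1 ≤ m := by omega
      have hc := colorable_even m hm1
      rw [show 2 * m = k from by omega] at hc
      refine hc.chromaticNumber_le.trans ?_
      have e1 : 3 * (k + 1) ^ 2 + 3 = 4 * (3 * m ^ 2 + 3 * m + 1) + 2 := by
        rw [show k = 2 * m from by omega]; ring
      have heq : 3 * m ^ 2 + 3 * m + 1 = (3 * (k + 1) ^ 2 + 3) / 4 := by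
        rw [e1]; generalize (3 * m ^ 2 + 3 * m + 1) = X; omega
      rw [heq]
    · -- k = 2 * m + 1
      have hc := colorable_odd (m + 1) (by omega)
      rw [show 2 * (m + 1) - 1 = k from by omega] at hc
      refine hc.chromaticNumber_le.trans ?_
      have e1 : 3 * (k + 1) ^ 2 + 3 = 4 * ((m + 1) * (3 * (m + 1))) + 3 := by
        rw [hm]; ring
      have heq : (m + 1) * (3 * (m + 1)) = (3 * (k + 1) ^ 2 + 3) / 4 := by
        rw [e1]; generalize ((m + 1) * (3 * (m + 1))) = X; omega
      rw [heq]
  · have h := (cliqueSet_isClique k).card_le_chromaticNumber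
    rwa [cliqueSet_card] at h
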